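/- Let a₀,…,a_m ∈ kⁿ be a simplicial sequence with witnessing indices i₀ < ⋯ < i_k, and let r_i ≤ s_i in k (i = 0,…,m) be constant on each block [i_κ, i_{κ+1}) (i.e., r_i = r_{i_κ} and s_i = s_{i_κ} for i_κ ≤ i < i_{κ+1}). Set b_i = (a_i, r_i) and c_i = (a_i, s_i) in k^{n+1}. Then for any 0 ≤ j₀ < ⋯ < j_p ≤ j_{p+1} < ⋯ < j_q ≤ m with p < q, the sequence b_{j₀},…,b_{j_p}, c_{j_{p+1}},…,c_{j_q} is simplicial. -/

import Mathlib

def IsSimplicialWith {K : Type*} [Field K] [LinearOrder K] [IsStrictOrderedRing K] {n m k : ℕ}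
    (a : Fin (m + 1) → (Fin n → K)) (ι : Fin (k + 1) → Fin (m + 1)) : Prop :=
  StrictMono ι ∧ ι 0 = 0 ∧ AffineIndependent K (a ∘ ι) ∧
    ∀ (κ : Fin (k + 1)) (i : Fin (m + 1)), ι κ ≤ i →
      (∀ κ' : Fin (k + 1), κ < κ' → i < ι κ') → a i = a (ι κ)

def IsSimplicialSeq {K : Type*} [Field K] [LinearOrder K] [IsStrictOrderedRing K] {n m : ℕ}
    (a : Fin (m + 1) → (Fin n → K)) : Prop :=
  ∃ (k : ℕ) (ι : Fin (k + 1) → Fin (m + 1)), IsSimplicialWith a ι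

lemma aux_factor {K : Type*} [Field K] [LinearOrder K] [IsStrictOrderedRing K] {n q t : ℕ} {α : Type*} [LinearOrder α]
    (e : Fin (q + 1) → (Fin n → K)) (L : Fin (q + 1) → α) (hL : Monotone L)
    (V : α → (Fin n → K)) (he : ∀ i, e i = V (L i))
    (c : Fin (t + 1) → α) (hc : StrictMono c)
    (hr1 : ∀ i, ∃ κ, L i = c κ) (hr2 : ∀ κ, ∃ i, L i = c κ)
    (hAI : AffineIndependent K (fun κ => V (c κ))) :
    IsSimplicialSeq e := by
  have hne : ∀ κ : Fin (t + 1), (Finset.univ.filter (fun i => L i = c κ)).Nonempty := by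
    intro κ
    obtain ⟨i, hi⟩ := hr2 κ
    exact ⟨i, by simp [hi]⟩
  set ι' : Fin (t + 1) → Fin (q + 1) :=
    fun κ => (Finset.univ.filter (fun i => L i = c κ)).min' (hne κ) with hι'
  have hLι' : ∀ κ, L (ι' κ) = c κ := by
    intro κ
    have := Finset.min'_mem _ (hne κ)
    simpa [hι'] using this
  have hmin : ∀ (κ : Fin (t+1)) (i : Fin (q+1)), L i = c κ → ι' κ ≤ i := by
    intro κ i hi
    exact Finset.min'_le _ _ (by simp [hi])
  refine ⟨t, ι', ?_, ?_, ?_, ?_⟩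
  · intro κ κ' hκ
    by_contra hle
    push_neg at hle
    have h1 : L (ι' κ') ≤ L (ι' κ) := hL hle
    rw [hLι', hLι'] at h1
    exact absurd h1 (not_le.mpr (hc hκ))
  · have h0 : L 0 = c 0 := by
      obtain ⟨κ₀, hκ₀⟩ := hr1 0
      obtain ⟨i₀, hi₀⟩ := hr2 0
      have h1 : c κ₀ ≤ c 0 := by
        rw [← hκ₀, ← hi₀]; exact hL (Fin.zero_le _)
      have h2 : κ₀ ≤ 0 := hc.le_iff_le.mp h1
      rw [hκ₀, le_antisymm h2 (Fin.zero_le _)]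
    exact le_antisymm (hmin 0 0 h0) (Fin.zero_le _)
  · have hcomp : (e ∘ ι') = fun κ => V (c κ) := by
      funext κ
      simp only [Function.comp_apply, he, hLι']
    rw [hcomp]
    exact hAI
  · intro κ i hle hlt
    obtain ⟨κ'', h''⟩ := hr1 i
    have h1 : c κ ≤ c κ'' := by
      rw [← hLι' κ, ← h'']; exact hL hle
    have h2 : κ ≤ κ'' := hc.le_iff_le.mp h1
    rcases eq_or_lt_of_le h2 with hEq | hlt2
    · rw [he i, he (ι' κ), hLι', h'', ← hEq]
    · exact absurd (hmin κ'' i h'') (not_le.mpr (hlt κ'' hlt2))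

lemma aux_AI {K : Type*} [Field K] [LinearOrder K] [IsStrictOrderedRing K] {n k t : ℕ}
    (A : Fin (k + 1) → (Fin n → K)) (hA : AffineIndependent K A)
    (g : Fin (t + 1) → Fin (k + 1)) (x : Fin (t + 1) → K)
    (hpair : ∀ τ₁ τ₂, τ₁ ≠ τ₂ → g τ₁ = g τ₂ → x τ₁ ≠ x τ₂)
    (hone : ∀ τ₁ τ₂ τ₃ τ₄, τ₁ ≠ τ₂ → τ₃ ≠ τ₄ → g τ₁ = g τ₂ → g τ₃ = g τ₄ →
      τ₃ = τ₁ ∨ τ₃ = τ₂) :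
    AffineIndependent K (fun τ => (Fin.snoc (A (g τ)) (x τ) : Fin (n + 1) → K)) := by
  rw [affineIndependent_iff]
  intro S w hw0 hsum
  -- fiberwise weights
  have hW0 : ∑ κ : Fin (k+1), ∑ τ ∈ S.filter (fun τ => g τ = κ), w τ = 0 := by
    rw [Finset.sum_fiberwise_of_maps_to (fun τ _ => Finset.mem_univ (g τ)) w]
    exact hw0
  have hproj : ∀ j : Fin n, ∑ τ ∈ S, w τ * A (g τ) j = 0 := by
    intro j
    have := congrFun hsum (Fin.castSucc j)
    simpa [Finset.sum_apply, Fin.snoc_castSucc] using this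
  have hWsum : ∑ κ : Fin (k+1), (∑ τ ∈ S.filter (fun τ => g τ = κ), w τ) • A κ = 0 := by
    funext j
    have h1 : ∀ κ : Fin (k+1), (∑ τ ∈ S.filter (fun τ => g τ = κ), w τ) * A κ j = ∑ τ ∈ S.filter (fun τ => g τ = κ), w τ * A (g τ) j := by
      intro κ
      rw [Finset.sum_mul]
      apply Finset.sum_congr rfl
      intro τ hτ
      rw [(Finset.mem_filter.mp hτ).2]
    simp only [Finset.sum_apply, Pi.smul_apply, smul_eq_mul, Pi.zero_apply]
    rw [Finset.sum_congr rfl (fun κ _ => h1 κ)]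
    rw [Finset.sum_fiberwise_of_maps_to (fun τ _ => Finset.mem_univ (g τ))]
    exact hproj j
  have hWzero : ∀ κ : Fin (k+1), ∑ τ ∈ S.filter (fun τ => g τ = κ), w τ = 0 := by
    intro κ
    exact affineIndependent_iff.mp hA Finset.univ _ hW0 hWsum κ (Finset.mem_univ κ)
  -- singleton fibers
  have hsingle : ∀ τ ∈ S, (∀ τ' ∈ S, τ' ≠ τ → g τ' ≠ g τ) → w τ = 0 := by
    intro τ hτ hno
    have hfib : S.filter (fun τ' => g τ' = g τ) = {τ} := by
      ext τ'
      simp only [Finset.mem_filter, Finset.mem_singleton]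
      constructor
      · rintro ⟨hτ', hg⟩
        by_contra hne
        exact hno τ' hτ' hne hg
      · rintro rfl; exact ⟨hτ, rfl⟩
    have := hWzero (g τ)
    rw [hfib, Finset.sum_singleton] at this
    exact this
  intro τS hτS
  by_cases hex : ∃ τ' ∈ S, τ' ≠ τS ∧ g τ' = g τS
  · obtain ⟨τ', hτ'S, hτ'ne, hτ'g⟩ := hex
    -- every other index has singleton fiber
    have hrest : ∀ τ ∈ S, τ ≠ τS → τ ≠ τ' → w τ = 0 := by
      intro τ hτ h1 h2
      apply hsingle τ hτ
      intro τ'' hτ'' hne hg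
      rcases hone τS τ' τ τ'' (Ne.symm hτ'ne) (Ne.symm hne) hτ'g.symm hg.symm with h | h
      · exact h1 h
      · exact h2 h
    -- fiber of τS is {τS, τ'}
    have hfib : S.filter (fun τ'' => g τ'' = g τS) = {τS, τ'} := by
      ext τ''
      simp only [Finset.mem_filter, Finset.mem_insert, Finset.mem_singleton]
      constructor
      · rintro ⟨hτ'', hg⟩
        by_cases hcase : τ'' = τS
        · exact Or.inl hcase
        · rcases hone τS τ' τ'' τS (Ne.symm hτ'ne) hcase hτ'g.symm hg with h | h
          · exact Or.inl h
          · exact Or.inr h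
      · rintro (rfl | rfl)
        · exact ⟨hτS, rfl⟩
        · exact ⟨hτ'S, hτ'g⟩
    have hWτS := hWzero (g τS)
    rw [hfib, Finset.sum_pair hτ'ne.symm] at hWτS
    -- last coordinate
    have hlast : ∑ τ ∈ S, w τ * x τ = 0 := by
      have := congrFun hsum (Fin.last n)
      simpa [Finset.sum_apply, Fin.snoc_last] using this
    have hpairsum : w τS * x τS + w τ' * x τ' = 0 := by
      have h2 : ∑ τ ∈ ({τS, τ'} : Finset (Fin (t+1))), w τ * x τ = ∑ τ ∈ S, w τ * x τ := by
        apply Finset.sum_subset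
        · intro τ hτ
          simp only [Finset.mem_insert, Finset.mem_singleton] at hτ
          rcases hτ with rfl | rfl
          · exact hτS
          · exact hτ'S
        · intro τ hτ hnot
          simp only [Finset.mem_insert, Finset.mem_singleton] at hnot
          push_neg at hnot
          rw [hrest τ hτ hnot.1 hnot.2]
          ring
      rw [Finset.sum_pair hτ'ne.symm] at h2
      rw [h2, hlast]
    have hw' : w τ' = -w τS := by linarith
    rw [hw'] at hpairsum
    have : w τS * (x τS - x τ') = 0 := by ring_nf; linarith [hpairsum]
    rcases mul_eq_zero.mp this with h | h
    · exact h
    · exact absurd (by linarith : x τS = x τ') (hpair τS τ' (Ne.symm hτ'ne) hτ'g.symm)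
  · push_neg at hex
    exact hsingle τS hτS (fun τ' h1 h2 => hex τ' h1 h2)

theorem stmt9 {K : Type*} [Field K] [LinearOrder K] [IsStrictOrderedRing K] {n m k : ℕ}
    (a : Fin (m + 1) → (Fin n → K)) (ι : Fin (k + 1) → Fin (m + 1))
    (h : IsSimplicialWith a ι)
    (r s : Fin (m + 1) → K) (hrs : ∀ i, r i ≤ s i)
    -- r and s are constant on each block [ι κ, ι (κ+1))
    (hrblock : ∀ (κ : Fin (k + 1)) (i : Fin (m + 1)), ι κ ≤ i →
      (∀ κ' : Fin (k + 1), κ < κ' → i < ι κ') → r i = r (ι κ) ∧ s i = s (ι κ))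
    -- b_i = (a_i, r_i),  c_i = (a_i, s_i) in K^{n+1}
    (b c : Fin (m + 1) → (Fin (n + 1) → K))
    (hb : ∀ i, b i = Fin.snoc (a i) (r i)) (hc : ∀ i, c i = Fin.snoc (a i) (s i))
    -- indices 0 ≤ j₀ < ⋯ < j_p ≤ j_{p+1} < ⋯ < j_q ≤ m
    (p q : ℕ) (hpq : p < q) (d : Fin (q + 1) → Fin (m + 1))
    (hmono : ∀ i j : Fin (q + 1), i < j → d i ≤ d j)
    (hstrict₁ : ∀ i j : Fin (q + 1), i < j → (j : ℕ) ≤ p → d i < d j)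
    (hstrict₂ : ∀ i j : Fin (q + 1), i < j → p + 1 ≤ (i : ℕ) → d i < d j) :
    -- the sequence b_{j₀},…,b_{j_p}, c_{j_{p+1}},…,c_{j_q} is simplicial
    IsSimplicialSeq (fun i : Fin (q + 1) => if (i : ℕ) ≤ p then b (d i) else c (d i)) := by
  obtain ⟨hιmono, hι0, hAI, hconst⟩ := h
  classical
  -- the block function β
  have hne : ∀ i : Fin (m+1), (Finset.univ.filter (fun κ : Fin (k+1) => ι κ ≤ i)).Nonempty := by
    intro i
    exact ⟨0, by simp [hι0, Fin.zero_le]⟩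
  let β : Fin (m+1) → Fin (k+1) :=
    fun i => (Finset.univ.filter (fun κ : Fin (k+1) => ι κ ≤ i)).max' (hne i)
  have hβ1 : ∀ i, ι (β i) ≤ i := by
    intro i
    exact (Finset.mem_filter.mp (Finset.max'_mem _ (hne i))).2
  have hβ2 : ∀ (i : Fin (m+1)) (κ' : Fin (k+1)), β i < κ' → i < ι κ' := by
    intro i κ' hlt
    by_contra hle
    push_neg at hle
    exact absurd (Finset.le_max' _ κ' (by simp [hle])) (not_le.mpr hlt)
  have hβmono : ∀ i i' : Fin (m+1), i ≤ i' → β i ≤ β i' := by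
    intro i i' hii
    exact Finset.le_max' _ _ (by simp [le_trans (hβ1 i) hii])
  have ha : ∀ i, a i = a (ι (β i)) := fun i => hconst (β i) i (hβ1 i) (hβ2 i)
  have hrc : ∀ i, r i = r (ι (β i)) ∧ s i = s (ι (β i)) :=
    fun i => hrblock (β i) i (hβ1 i) (hβ2 i)
  -- labels
  let flag : Fin (q+1) → Bool :=
    fun i => decide (p < (i:ℕ) ∧ r (ι (β (d i))) ≠ s (ι (β (d i))))
  let L : Fin (q+1) → (Fin (k+1) ×ₗ Bool) := fun i => toLex (β (d i), flag i)
  let V : (Fin (k+1) ×ₗ Bool) → (Fin (n+1) → K) := fun z =>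
    Fin.snoc (a (ι (ofLex z).1))
      (if (ofLex z).2 then s (ι (ofLex z).1) else r (ι (ofLex z).1))
  have hflag_true : ∀ i : Fin (q+1), flag i = true ↔
      (p < (i:ℕ) ∧ r (ι (β (d i))) ≠ s (ι (β (d i)))) := by
    intro i; simp [flag]
  have he : ∀ i : Fin (q+1),
      (if (i : ℕ) ≤ p then b (d i) else c (d i)) = V (L i) := by
    intro i
    show _ = Fin.snoc (α := fun _ => K) (a (ι (β (d i))))
      (if flag i then s (ι (β (d i))) else r (ι (β (d i))))
    by_cases hip : (i:ℕ) ≤ p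
    · rw [if_pos hip]
      have hfl : flag i = false := by
        simp [flag, Nat.not_lt.mpr hip]
      rw [hfl]
      rw [hb, ha (d i), (hrc (d i)).1]
      simp
    · rw [if_neg hip]
      rw [hc, ha (d i), (hrc (d i)).2]
      by_cases hrs' : r (ι (β (d i))) = s (ι (β (d i)))
      · have hfl : flag i = false := by
          simp [flag, hrs']
        rw [hfl, hrs']
        simp
      · have hfl : flag i = true := by
          simp [flag, hrs', Nat.lt_of_not_le hip]
        rw [hfl]
        simp
  -- monotonicity of labels
  have hdmono : ∀ i j : Fin (q+1), i ≤ j → d i ≤ d j := by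
    intro i j hij
    rcases eq_or_lt_of_le hij with rfl | hlt
    · exact le_refl _
    · exact hmono i j hlt
  have hLmono : Monotone L := by
    intro i j hij
    have hβd : β (d i) ≤ β (d j) := hβmono _ _ (hdmono i j hij)
    rcases eq_or_lt_of_le hβd with hEq | hlt
    · apply Prod.Lex.le_iff.mpr
      right
      refine ⟨hEq, ?_⟩
      show flag i ≤ flag j
      cases hfi : flag i with
      | false => exact Bool.false_le _
      | true =>
        have h1 := (hflag_true i).mp hfi
        have h2 : flag j = true := by
          rw [hflag_true]
          exact ⟨lt_of_lt_of_le h1.1 (by exact_mod_cast hij), by rw [← hEq]; exact h1.2⟩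
        exact le_of_eq h2.symm
    · exact Prod.Lex.le_iff.mpr (Or.inl hlt)
  -- the sorted enumeration of attained labels
  have hS : (Finset.image L Finset.univ).Nonempty :=
    ⟨L 0, Finset.mem_image_of_mem _ (Finset.mem_univ 0)⟩
  have hcardpos : 0 < (Finset.image L Finset.univ).card := Finset.card_pos.mpr hS
  have hcard : (Finset.image L Finset.univ).card =
      ((Finset.image L Finset.univ).card - 1) + 1 := by omega
  let cc : Fin (((Finset.image L Finset.univ).card - 1) + 1) → (Fin (k+1) ×ₗ Bool) :=
    fun τ => (Finset.image L Finset.univ).orderEmbOfFin hcard τ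
  have hccmono : StrictMono cc :=
    ((Finset.image L Finset.univ).orderEmbOfFin hcard).strictMono
  have hr2 : ∀ τ, ∃ i, L i = cc τ := by
    intro τ
    have := Finset.orderEmbOfFin_mem (Finset.image L Finset.univ) hcard τ
    obtain ⟨i, _, hi⟩ := Finset.mem_image.mp this
    exact ⟨i, hi⟩
  have hr1 : ∀ i, ∃ τ, L i = cc τ := by
    intro i
    have hmem : L i ∈ Finset.image L Finset.univ :=
      Finset.mem_image_of_mem _ (Finset.mem_univ i)
    have hrange := Finset.range_orderEmbOfFin (Finset.image L Finset.univ) hcard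
    have : L i ∈ Set.range ((Finset.image L Finset.univ).orderEmbOfFin hcard) := by
      rw [hrange]; exact_mod_cast hmem
    obtain ⟨τ, hτ⟩ := this
    exact ⟨τ, hτ.symm⟩
  -- properties for affine independence
  have hTrue : ∀ τ, (ofLex (cc τ)).2 = true →
      r (ι ((ofLex (cc τ)).1)) ≠ s (ι ((ofLex (cc τ)).1)) := by
    intro τ hτ
    obtain ⟨i, hi⟩ := hr2 τ
    have h1 : β (d i) = (ofLex (cc τ)).1 := by rw [← hi]; rfl
    have h2 : flag i = (ofLex (cc τ)).2 := by rw [← hi]; rfl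
    rw [← h1]
    exact ((hflag_true i).mp (h2.trans hτ)).2
  have hdouble : ∀ τa τb, τa ≠ τb → (ofLex (cc τa)).1 = (ofLex (cc τb)).1 →
      ∃ i j : Fin (q+1), (i:ℕ) ≤ p ∧ p < (j:ℕ) ∧
        β (d i) = (ofLex (cc τa)).1 ∧ β (d j) = (ofLex (cc τa)).1 := by
    intro τa τb hne' hfst
    have hccne : cc τa ≠ cc τb := fun hcontra => hne' (hccmono.injective hcontra)
    have hsnd : (ofLex (cc τa)).2 ≠ (ofLex (cc τb)).2 := by
      intro hsame
      exact hccne (ofLex.injective (Prod.ext hfst hsame))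
    -- one of the flags is true, the other false
    obtain ⟨τT, τF, hT, hF, hTa⟩ :
        ∃ τT τF : Fin _, (ofLex (cc τT)).2 = true ∧ (ofLex (cc τF)).2 = false ∧
          ((ofLex (cc τT)).1 = (ofLex (cc τa)).1 ∧ (ofLex (cc τF)).1 = (ofLex (cc τa)).1) := by
      cases hA2 : (ofLex (cc τa)).2 with
      | false =>
        cases hB2 : (ofLex (cc τb)).2 with
        | false => rw [hA2, hB2] at hsnd; exact absurd rfl hsnd
        | true => exact ⟨τb, τa, hB2, hA2, hfst.symm, rfl⟩
      | true =>
        cases hB2 : (ofLex (cc τb)).2 with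
        | false => exact ⟨τa, τb, hA2, hB2, rfl, hfst.symm⟩
        | true => rw [hA2, hB2] at hsnd; exact absurd rfl hsnd
    obtain ⟨j, hj⟩ := hr2 τT
    obtain ⟨i, hi⟩ := hr2 τF
    have hj1 : β (d j) = (ofLex (cc τT)).1 := by rw [← hj]; rfl
    have hj2 : flag j = (ofLex (cc τT)).2 := by rw [← hj]; rfl
    have hi1 : β (d i) = (ofLex (cc τF)).1 := by rw [← hi]; rfl
    have hi2 : flag i = (ofLex (cc τF)).2 := by rw [← hi]; rfl
    have hjflag := (hflag_true j).mp (hj2.trans hT)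
    have hineq : (i:ℕ) ≤ p := by
      by_contra hgt
      push_neg at hgt
      have : flag i = true := by
        rw [hflag_true]
        refine ⟨hgt, ?_⟩
        rw [hi1, hTa.2, ← hTa.1, ← hj1]
        exact hjflag.2
      rw [hi2, hF] at this
      exact Bool.false_ne_true this
    exact ⟨i, j, hineq, hjflag.1, by rw [hi1, hTa.2], by rw [hj1, hTa.1]⟩
  have boolaux : ∀ b1 b2 b3 : Bool, b1 ≠ b2 → b3 = b1 ∨ b3 = b2 := by decide
  have hsndne : ∀ τ₁ τ₂, τ₁ ≠ τ₂ → (ofLex (cc τ₁)).1 = (ofLex (cc τ₂)).1 →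
      (ofLex (cc τ₁)).2 ≠ (ofLex (cc τ₂)).2 := by
    intro τ₁ τ₂ hne' hg hsame
    exact (fun hcontra => hne' (hccmono.injective hcontra))
      (ofLex.injective (Prod.ext hg hsame))
  have hpair' : ∀ τ₁ τ₂, τ₁ ≠ τ₂ → (ofLex (cc τ₁)).1 = (ofLex (cc τ₂)).1 →
      (if (ofLex (cc τ₁)).2 then s (ι ((ofLex (cc τ₁)).1)) else r (ι ((ofLex (cc τ₁)).1))) ≠
      (if (ofLex (cc τ₂)).2 then s (ι ((ofLex (cc τ₂)).1)) else r (ι ((ofLex (cc τ₂)).1))) := by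
    intro τ₁ τ₂ hne' hg
    have hsnd := hsndne τ₁ τ₂ hne' hg
    cases h1 : (ofLex (cc τ₁)).2 with
    | false =>
      cases h2 : (ofLex (cc τ₂)).2 with
      | false => rw [h1, h2] at hsnd; exact absurd rfl hsnd
      | true =>
        have hne2 := hTrue τ₂ h2
        simp only [if_neg, if_pos, Bool.false_eq_true, if_false, if_true]
        rw [hg]
        exact fun hcontra => hne2 hcontra
    | true =>
      cases h2 : (ofLex (cc τ₂)).2 with
      | false =>
        have hne2 := hTrue τ₁ h1
        simp only [Bool.false_eq_true, if_false, if_true]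
        rw [← hg]
        exact fun hcontra => hne2 hcontra.symm
      | true => rw [h1, h2] at hsnd; exact absurd rfl hsnd
  have hone' : ∀ τ₁ τ₂ τ₃ τ₄, τ₁ ≠ τ₂ → τ₃ ≠ τ₄ →
      (ofLex (cc τ₁)).1 = (ofLex (cc τ₂)).1 → (ofLex (cc τ₃)).1 = (ofLex (cc τ₄)).1 →
      τ₃ = τ₁ ∨ τ₃ = τ₂ := by
    intro τ₁ τ₂ τ₃ τ₄ h12 h34 hg12 hg34
    obtain ⟨i, j, hi, hj, hbi, hbj⟩ := hdouble τ₁ τ₂ h12 hg12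
    obtain ⟨i', j', hi', hj', hbi', hbj'⟩ := hdouble τ₃ τ₄ h34 hg34
    have hij' : (i:ℕ) < (j':ℕ) := lt_of_le_of_lt hi hj'
    have hi'j : (i':ℕ) < (j:ℕ) := lt_of_le_of_lt hi' hj
    have hle1 : (ofLex (cc τ₁)).1 ≤ (ofLex (cc τ₃)).1 := by
      rw [← hbi, ← hbj']
      exact hβmono _ _ (hdmono i j' (le_of_lt (by exact_mod_cast hij')))
    have hle2 : (ofLex (cc τ₃)).1 ≤ (ofLex (cc τ₁)).1 := by
      rw [← hbi', ← hbj]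
      exact hβmono _ _ (hdmono i' j (le_of_lt (by exact_mod_cast hi'j)))
    have hκeq : (ofLex (cc τ₃)).1 = (ofLex (cc τ₁)).1 := le_antisymm hle2 hle1
    have hsnd := hsndne τ₁ τ₂ h12 hg12
    rcases boolaux _ _ ((ofLex (cc τ₃)).2) hsnd with hcase | hcase
    · left
      exact hccmono.injective (ofLex.injective (Prod.ext hκeq hcase))
    · right
      exact hccmono.injective (ofLex.injective (Prod.ext (hκeq.trans hg12) hcase))
  have hAIfinal : AffineIndependent K (fun τ => V (cc τ)) :=
    aux_AI (a ∘ ι) hAI (fun τ => (ofLex (cc τ)).1)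
      (fun τ => if (ofLex (cc τ)).2 then s (ι ((ofLex (cc τ)).1)) else r (ι ((ofLex (cc τ)).1)))
      hpair' hone'
  exact aux_factor _ L hLmono V he cc hccmono hr1 hr2 hAIfinal
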